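/- Let H and G be real Hilbert spaces, m ≥ 1, let T : ℝ^m → H and S : ℝ^m → G be injective continuous linear maps, let η be the inward pointing normal vector associated with T, and let ξ be the inward pointing normal vector associated with S. Then there exists a unique λ > 0 such that ⟨ξ, S v⟩_G = λ·⟨η, T v⟩_H for all v ∈ ℝ^m. -/

import Mathlib

open scoped InnerProductSpace

theorem stmt_9
    {H G : Type*} [NormedAddCommGroup H] [InnerProductSpace ℝ H]
    [NormedAddCommGroup G] [InnerProductSpace ℝ G]
    (m : ℕ) [NeZero m] (hm : 1 ≤ m)
    (T : EuclideanSpace ℝ (Fin m) →L[ℝ] H) (hT : Function.Injective T)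
    (S : EuclideanSpace ℝ (Fin m) →L[ℝ] G) (hS : Function.Injective S)
    (η : H)
    (hη₁ : η ∈ ⇑T '' {y : EuclideanSpace ℝ (Fin m) | 0 ≤ y 0})
    (hη₂ : ‖η‖ = 1)
    (hη₃ : ∀ v : EuclideanSpace ℝ (Fin m), v 0 = 0 → ⟪η, T v⟫_ℝ = 0)
    (ξ : G)
    (hξ₁ : ξ ∈ ⇑S '' {y : EuclideanSpace ℝ (Fin m) | 0 ≤ y 0})
    (hξ₂ : ‖ξ‖ = 1)
    (hξ₃ : ∀ v : EuclideanSpace ℝ (Fin m), v 0 = 0 → ⟪ξ, S v⟫_ℝ = 0) :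
    ∃! l : ℝ, 0 < l ∧ ∀ v : EuclideanSpace ℝ (Fin m), ⟪ξ, S v⟫_ℝ = l * ⟪η, T v⟫_ℝ := by
  classical
  set e : EuclideanSpace ℝ (Fin m) := EuclideanSpace.single 0 1 with he
  have hTv : ∀ v : EuclideanSpace ℝ (Fin m), ⟪η, T v⟫_ℝ = v 0 * ⟪η, T e⟫_ℝ := by
    intro v
    have h0 : (v - v 0 • e) 0 = 0 := by
      simp [he, EuclideanSpace.single_apply]
    have hz := hη₃ _ h0
    have hv : v = v 0 • e + (v - v 0 • e) := by abel
    calc ⟪η, T v⟫_ℝ = ⟪η, T (v 0 • e + (v - v 0 • e))⟫_ℝ := by rw [← hv]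
      _ = v 0 * ⟪η, T e⟫_ℝ := by
        rw [map_add, map_smul, inner_add_right, inner_smul_right, hz, add_zero]
  have hSv : ∀ v : EuclideanSpace ℝ (Fin m), ⟪ξ, S v⟫_ℝ = v 0 * ⟪ξ, S e⟫_ℝ := by
    intro v
    have h0 : (v - v 0 • e) 0 = 0 := by
      simp [he, EuclideanSpace.single_apply]
    have hz := hξ₃ _ h0
    have hv : v = v 0 • e + (v - v 0 • e) := by abel
    calc ⟪ξ, S v⟫_ℝ = ⟪ξ, S (v 0 • e + (v - v 0 • e))⟫_ℝ := by rw [← hv]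
      _ = v 0 * ⟪ξ, S e⟫_ℝ := by
        rw [map_add, map_smul, inner_add_right, inner_smul_right, hz, add_zero]
  set a : ℝ := ⟪η, T e⟫_ℝ with ha
  set b : ℝ := ⟪ξ, S e⟫_ℝ with hb
  obtain ⟨w, hw0, hwη⟩ := hη₁
  obtain ⟨u, hu0, huξ⟩ := hξ₁
  have haw : w 0 * a = 1 := by
    have h1 := hTv w
    rw [hwη, real_inner_self_eq_norm_sq, hη₂] at h1
    linarith
  have hbu : u 0 * b = 1 := by
    have h1 := hSv u
    rw [huξ, real_inner_self_eq_norm_sq, hξ₂] at h1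
    linarith
  have hw0' : 0 ≤ w 0 := hw0
  have hu0' : 0 ≤ u 0 := hu0
  have ha0 : 0 < a := by
    by_contra h
    push_neg at h
    nlinarith [mul_nonpos_of_nonneg_of_nonpos hw0' h]
  have hb0 : 0 < b := by
    by_contra h
    push_neg at h
    nlinarith [mul_nonpos_of_nonneg_of_nonpos hu0' h]
  refine ⟨b / a, ⟨div_pos hb0 ha0, fun v => ?_⟩, fun l hl => ?_⟩
  · rw [hSv v, hTv v]
    field_simp
  · have h1 := hl.2 e
    rw [hSv e, hTv e] at h1
    simp only [he, EuclideanSpace.single_apply] at h1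
    field_simp at h1 ⊢
    linarith
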